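/- Let Γ be a finite connected graph with n edges and loop number ℓ_Γ (cycle rank), and let P_Γ ⊂ ℝⁿ be the Minkowski sum of SP_Γ (convex hull of incidence vectors of complements of spanning trees) and E_n (convex hull of 0, e₁, ..., e_n). Then P_Γ equals the polytope P'_Γ defined by the inequalities ⟨1_γ, x⟩ ≥ ℓ_γ for every subgraph γ ⊆ Γ, together with ⟨1_Γ, x⟩ ≤ ℓ_Γ + 1. -/

import Mathlib

open scoped Classical

/-- A finite multigraph on vertex type `V` with edge type `E` is given by an
endpoint map `G : E → Sym2 V`. -/
structure Subgraph {V E : Type} [Fintype V] [Fintype E] [DecidableEq V] [DecidableEq E]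
    (G : E → Sym2 V) where
  verts : Finset V
  edges : Finset E
  incl : ∀ e ∈ edges, ∀ v ∈ G e, v ∈ verts

variable {V E : Type} [Fintype V] [Fintype E] [DecidableEq V] [DecidableEq E]

/-- Number of connected components of a subgraph. -/
noncomputable def comps (G : E → Sym2 V) (H : Subgraph G) : ℕ :=
  Nat.card (Quot fun a b : {v : V // v ∈ H.verts} => ∃ e ∈ H.edges, G e = s(a.1, b.1))

/-- Cycle rank (first Betti number) `ℓ(H) = |E(H)| - |V(H)| + c(H)`. -/
noncomputable def cycleRank (G : E → Sym2 V) (H : Subgraph G) : ℤ :=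
  (H.edges.card : ℤ) - (H.verts.card : ℤ) + (comps G H : ℤ)

/-- The spanning subgraph with all vertices and edge set `S`. -/
def spanningSub (G : E → Sym2 V) (S : Finset E) : Subgraph G where
  verts := Finset.univ
  edges := S
  incl := fun _ _ v _ => Finset.mem_univ v

/-- `T` is (the edge set of) a spanning tree of `G`. -/
noncomputable def IsSpanningTree (G : E → Sym2 V) (T : Finset E) : Prop :=
  T.card + 1 = Fintype.card V ∧ comps G (spanningSub G T) = 1

/-- The graph `G` is connected. -/
noncomputable def GraphConnected (G : E → Sym2 V) : Prop :=
  comps G (spanningSub G Finset.univ) = 1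

/-- Real incidence vector of a set of edges. -/
def ind (S : Finset E) : E → ℝ := fun e => if e ∈ S then 1 else 0

/-- Integer incidence vector of a set of edges. -/
def indZ (S : Finset E) : E → ℤ := fun e => if e ∈ S then 1 else 0

open scoped Pointwise

section QuotToolkit


variable {α : Type} [Finite α]

open Relation

/-- surjection-based monotonicity of quotient cardinality -/
theorem card_quot_le {r r' : α → α → Prop} (h : ∀ a b, r a b → r' a b) :
    Nat.card (Quot r') ≤ Nat.card (Quot r) := by
  apply Nat.card_le_card_of_surjective
    (Quot.lift (Quot.mk r') (fun a b hab => Quot.sound (h a b hab)))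
  intro y
  obtain ⟨x, rfl⟩ := Quot.exists_rep y
  exact ⟨Quot.mk r x, rfl⟩

/-- analysis of the equivalence generated by `r` plus one extra pair `(p,q)` -/
theorem eqvGen_pair_analysis {r : α → α → Prop} {p q : α}
    {r' : α → α → Prop} (hr' : ∀ a b, r' a b ↔ r a b ∨ (a = p ∧ b = q) ∨ (a = q ∧ b = p))
    {x y : α} (h : EqvGen r' x y) :
    EqvGen r x y ∨ (EqvGen r x p ∧ EqvGen r q y) ∨ (EqvGen r x q ∧ EqvGen r p y) := by
  induction h with
  | rel a b hab =>
    rcases (hr' a b).1 hab with h1 | ⟨rfl, rfl⟩ | ⟨rfl, rfl⟩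
    · exact Or.inl (EqvGen.rel _ _ h1)
    · exact Or.inr (Or.inl ⟨EqvGen.refl _, EqvGen.refl _⟩)
    · exact Or.inr (Or.inr ⟨EqvGen.refl _, EqvGen.refl _⟩)
  | refl a => exact Or.inl (EqvGen.refl a)
  | symm a b _ ih =>
    rcases ih with h1 | ⟨h1, h2⟩ | ⟨h1, h2⟩
    · exact Or.inl h1.symm
    · exact Or.inr (Or.inr ⟨h2.symm, h1.symm⟩)
    · exact Or.inr (Or.inl ⟨h2.symm, h1.symm⟩)
  | trans a b c _ _ ih1 ih2 =>
    rcases ih1 with h1 | ⟨h1, h2⟩ | ⟨h1, h2⟩ <;>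
      rcases ih2 with g1 | ⟨g1, g2⟩ | ⟨g1, g2⟩
    · exact Or.inl (h1.trans _ _ _ g1)
    · exact Or.inr (Or.inl ⟨h1.trans _ _ _ g1, g2⟩)
    · exact Or.inr (Or.inr ⟨h1.trans _ _ _ g1, g2⟩)
    · exact Or.inr (Or.inl ⟨h1, h2.trans _ _ _ g1⟩)
    · exact Or.inl (EqvGen.trans _ _ _ (EqvGen.trans _ _ _ h1 (EqvGen.symm _ _ (EqvGen.trans _ _ _ h2 g1))) g2)
    · exact Or.inl (h1.trans _ _ _ g2)
    · exact Or.inr (Or.inr ⟨h1, h2.trans _ _ _ g1⟩)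
    · exact Or.inl (h1.trans _ _ _ g2)
    · exact Or.inl (EqvGen.trans _ _ _ (EqvGen.trans _ _ _ h1 (EqvGen.symm _ _ (EqvGen.trans _ _ _ h2 g1))) g2)
  
theorem card_quot_pair_conn {r r' : α → α → Prop} {p q : α}
    (hr' : ∀ a b, r' a b ↔ r a b ∨ (a = p ∧ b = q) ∨ (a = q ∧ b = p))
    (hconn : EqvGen r p q) : Nat.card (Quot r') = Nat.card (Quot r) := by
  refine (Nat.card_eq_of_bijective
    (Quot.lift (Quot.mk r') (fun a b hab => Quot.sound ((hr' a b).2 (Or.inl hab)))) ⟨?_, ?_⟩).symm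
  · intro u v
    obtain ⟨a, rfl⟩ := Quot.exists_rep u
    obtain ⟨b, rfl⟩ := Quot.exists_rep v
    intro huv
    have h := Quot.eqvGen_exact huv
    rcases eqvGen_pair_analysis hr' h with h1 | ⟨h1, h2⟩ | ⟨h1, h2⟩
    · exact Quot.eqvGen_sound h1
    · exact Quot.eqvGen_sound ((h1.trans _ _ _ hconn).trans _ _ _ h2)
    · exact Quot.eqvGen_sound ((h1.trans _ _ _ hconn.symm).trans _ _ _ h2)
  · intro y
    obtain ⟨x, rfl⟩ := Quot.exists_rep y
    exact ⟨Quot.mk r x, rfl⟩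

theorem card_quot_pair_not_conn {r r' : α → α → Prop} {p q : α}
    (hr' : ∀ a b, r' a b ↔ r a b ∨ (a = p ∧ b = q) ∨ (a = q ∧ b = p))
    (hnc : ¬ EqvGen r p q) : Nat.card (Quot r) = Nat.card (Quot r') + 1 := by
  classical
  have hfin : Finite (Quot r) := Quot.finite r
  -- the natural map
  set g : Quot r → Quot r' :=
    Quot.lift (Quot.mk r') (fun a b hab => Quot.sound ((hr' a b).2 (Or.inl hab))) with hg
  have key : Nat.card {u : Quot r // u ≠ Quot.mk r q} = Nat.card (Quot r') := by
    refine Nat.card_eq_of_bijective (fun u => g u.1) ⟨?_, ?_⟩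
    · rintro ⟨u, hu⟩ ⟨v, hv⟩ huv
      obtain ⟨a, rfl⟩ := Quot.exists_rep u
      obtain ⟨b, rfl⟩ := Quot.exists_rep v
      have h := Quot.eqvGen_exact (huv : g (Quot.mk r a) = g (Quot.mk r b))
      rcases eqvGen_pair_analysis hr' h with h1 | ⟨h1, h2⟩ | ⟨h1, h2⟩
      · exact Subtype.ext (Quot.eqvGen_sound h1)
      · exact absurd (Quot.eqvGen_sound h2.symm) hv
      · exact absurd (Quot.eqvGen_sound h1) hu
    · intro y
      obtain ⟨x, rfl⟩ := Quot.exists_rep y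
      by_cases hx : EqvGen r x q
      · have hpq : Quot.mk r p ≠ Quot.mk r q := fun h => hnc (Quot.eqvGen_exact h)
        refine ⟨⟨Quot.mk r p, hpq⟩, ?_⟩
        show Quot.mk r' p = Quot.mk r' x
        have : EqvGen r' x p :=
          (Relation.EqvGen.mono (fun a b hab => (hr' a b).2 (Or.inl hab)) _ _ hx).trans _ _ _
            (EqvGen.rel _ _ ((hr' q p).2 (Or.inr (Or.inr ⟨rfl, rfl⟩))))
        exact (Quot.eqvGen_sound this).symm
      · refine ⟨⟨Quot.mk r x, fun h => hx (Quot.eqvGen_exact h)⟩, rfl⟩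
  have : Nat.card (Quot r) = Nat.card {u : Quot r // u ≠ Quot.mk r q} + 1 := by
    have := Fintype.ofFinite (Quot r)
    rw [Nat.card_eq_fintype_card, Nat.card_eq_fintype_card]
    have h1 : Fintype.card {u : Quot r // u ≠ Quot.mk r q}
        = Fintype.card (Quot r) - Fintype.card {u : Quot r // u = Quot.mk r q} :=
      Fintype.card_subtype_compl _
    rw [Fintype.card_subtype_eq] at h1
    have hpos : 0 < Fintype.card (Quot r) := Fintype.card_pos_iff.2 ⟨Quot.mk r q⟩
    omega
  rw [this, key]

end QuotToolkit

section Graph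
variable {V E : Type} [Fintype V] [Fintype E] [DecidableEq V] [DecidableEq E]


open Relation

/-- the adjacency relation of the edge set `S` on all of `V` -/
def grel (G : E → Sym2 V) (S : Finset E) : V → V → Prop := fun a b => ∃ e ∈ S, G e = s(a, b)

/-- number of components of the spanning subgraph with edge set `S` -/
noncomputable def ncomps (G : E → Sym2 V) (S : Finset E) : ℕ := Nat.card (Quot (grel G S))

/-- corank of the edge set `S` -/
noncomputable def rk (G : E → Sym2 V) (S : Finset E) : ℤ :=
  (S.card : ℤ) - (Fintype.card V : ℤ) + (ncomps G S : ℤ)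

/-- the endpoints of `e` are connected in `S` -/
def conn (G : E → Sym2 V) (S : Finset E) (e : E) : Prop :=
  ∀ p q : V, G e = s(p, q) → EqvGen (grel G S) p q

theorem grel_insert (G : E → Sym2 V) (S : Finset E) {e : E} {p q : V} (hpq : G e = s(p, q)) :
    ∀ a b, grel G (insert e S) a b ↔ grel G S a b ∨ (a = p ∧ b = q) ∨ (a = q ∧ b = p) := by
  intro a b
  constructor
  · rintro ⟨f, hf, hfab⟩
    rcases Finset.mem_insert.1 hf with rfl | hfS
    · rw [hpq] at hfab
      exact Or.inr (Sym2.eq_iff.1 hfab.symm)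
    · exact Or.inl ⟨f, hfS, hfab⟩
  · rintro (⟨f, hfS, hfab⟩ | ⟨rfl, rfl⟩ | ⟨rfl, rfl⟩)
    · exact ⟨f, Finset.mem_insert_of_mem hfS, hfab⟩
    · exact ⟨e, Finset.mem_insert_self e S, hpq⟩
    · exact ⟨e, Finset.mem_insert_self e S, by rw [hpq, Sym2.eq_swap]⟩

theorem conn_mono (G : E → Sym2 V) {S S' : Finset E} (h : S ⊆ S') {e : E}
    (hc : conn G S e) : conn G S' e := by
  intro p q hpq
  exact (hc p q hpq).mono (fun a b ⟨f, hf, hfab⟩ => ⟨f, h hf, hfab⟩)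

theorem ncomps_mono (G : E → Sym2 V) {S S' : Finset E} (h : S ⊆ S') :
    ncomps G S' ≤ ncomps G S :=
  card_quot_le (fun a b ⟨f, hf, hfab⟩ => ⟨f, h hf, hfab⟩)

theorem ncomps_insert_conn (G : E → Sym2 V) {S : Finset E} {e : E} (hc : conn G S e) :
    ncomps G (insert e S) = ncomps G S := by
  obtain ⟨p, q, hpq⟩ : ∃ p q, G e = s(p, q) := Sym2.inductionOn (G e) (fun p q => ⟨p, q, rfl⟩)
  exact card_quot_pair_conn (grel_insert G S hpq) (hc p q hpq)

theorem ncomps_insert_not_conn (G : E → Sym2 V) {S : Finset E} {e : E} (hc : ¬ conn G S e) :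
    ncomps G S = ncomps G (insert e S) + 1 := by
  obtain ⟨p, q, hpq⟩ : ∃ p q, G e = s(p, q) := Sym2.inductionOn (G e) (fun p q => ⟨p, q, rfl⟩)
  refine card_quot_pair_not_conn (grel_insert G S hpq) (fun hcon => hc ?_)
  intro p' q' hpq'
  rw [hpq] at hpq'
  rcases Sym2.eq_iff.1 hpq' with ⟨rfl, rfl⟩ | ⟨rfl, rfl⟩
  · exact hcon
  · exact hcon.symm _ _

theorem ncomps_empty (G : E → Sym2 V) : ncomps G (∅ : Finset E) = Fintype.card V := by
  rw [ncomps, ← Nat.card_eq_fintype_card]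
  have key : ∀ a b : V, EqvGen (grel G ∅) a b → a = b := by
    intro a b h
    induction h with
    | rel u v huv => exact absurd huv.choose_spec.1 (Finset.notMem_empty _)
    | refl u => rfl
    | symm u v _ ih => exact ih.symm
    | trans u v w _ _ ih1 ih2 => exact ih1.trans ih2
  refine (Nat.card_eq_of_bijective (Quot.mk _) ⟨?_, Quot.exists_rep⟩).symm
  intro a b hab
  exact key a b (Quot.eqvGen_exact hab)

theorem rk_empty (G : E → Sym2 V) : rk G (∅ : Finset E) = 0 := by
  simp [rk, ncomps_empty]

theorem rk_insert (G : E → Sym2 V) {S : Finset E} {e : E} (he : e ∉ S) :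
    rk G (insert e S) = rk G S + (if conn G S e then 1 else 0) := by
  rw [rk, rk, Finset.card_insert_of_notMem he]
  by_cases hc : conn G S e
  · rw [ncomps_insert_conn G hc, if_pos hc]; push_cast; ring
  · rw [if_neg hc]
    have := ncomps_insert_not_conn G hc
    have : (ncomps G S : ℤ) = ncomps G (insert e S) + 1 := by exact_mod_cast this
    rw [this]; push_cast; ring

theorem rk_le_insert (G : E → Sym2 V) (S : Finset E) (e : E) :
    rk G S ≤ rk G (insert e S) := by
  by_cases he : e ∈ S
  · rw [Finset.insert_eq_self.2 he]
  · rw [rk_insert G he]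
    split <;> omega

theorem rk_mono (G : E → Sym2 V) {S S' : Finset E} (h : S ⊆ S') : rk G S ≤ rk G S' := by
  have : ∀ T S : Finset E, rk G S ≤ rk G (S ∪ T) := by
    intro T
    induction T using Finset.induction_on with
    | empty => simp
    | insert _ _ hx ih =>
      intro S
      rw [Finset.union_insert]
      exact le_trans (ih S) (rk_le_insert G _ _)
  calc rk G S ≤ rk G (S ∪ S') := this S' S
    _ = rk G S' := by rw [Finset.union_eq_right.2 h]

theorem rk_nonneg (G : E → Sym2 V) (S : Finset E) : 0 ≤ rk G S := by
  rw [← rk_empty G]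
  exact rk_mono G (Finset.empty_subset S)

/-- the `comps` of an arbitrary subgraph versus the spanning subgraph on the same edges -/
theorem comps_eq_ncomps (G : E → Sym2 V) (γ : Subgraph G) :
    (comps G γ : ℤ) + ((Fintype.card V : ℤ) - (γ.verts.card : ℤ)) = ncomps G γ.edges := by
  classical
  set rsub : {v : V // v ∈ γ.verts} → {v : V // v ∈ γ.verts} → Prop :=
    fun a b => ∃ e ∈ γ.edges, G e = s(a.1, b.1) with hrsub
  -- key: chains stay inside verts
  have key : ∀ x y : V, EqvGen (grel G γ.edges) x y →
      x = y ∨ ∃ (hx : x ∈ γ.verts) (hy : y ∈ γ.verts), EqvGen rsub ⟨x, hx⟩ ⟨y, hy⟩ := by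
    intro x y h
    induction h with
    | rel a b hab =>
      obtain ⟨e, he, hab⟩ := hab
      have ha : a ∈ γ.verts := γ.incl e he a (by rw [hab]; exact Sym2.mem_mk_left a b)
      have hb : b ∈ γ.verts := γ.incl e he b (by rw [hab]; exact Sym2.mem_mk_right a b)
      exact Or.inr ⟨ha, hb, EqvGen.rel _ _ ⟨e, he, hab⟩⟩
    | refl a => exact Or.inl rfl
    | symm a b _ ih =>
      rcases ih with rfl | ⟨ha, hb, h⟩
      · exact Or.inl rfl
      · exact Or.inr ⟨hb, ha, EqvGen.symm _ _ h⟩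
    | trans a b c _ _ ih1 ih2 =>
      rcases ih1 with rfl | ⟨ha, hb, h1⟩
      · exact ih2
      · rcases ih2 with rfl | ⟨hb', hc, h2⟩
        · exact Or.inr ⟨ha, hb, h1⟩
        · exact Or.inr ⟨ha, hc, EqvGen.trans _ _ _ h1 (by convert h2)⟩
  have hbij : Function.Bijective
      (Sum.elim (Quot.lift (fun a : {v : V // v ∈ γ.verts} => Quot.mk (grel G γ.edges) a.1)
          (fun a b hab => Quot.sound ⟨hab.choose, hab.choose_spec.1, hab.choose_spec.2⟩))
        (fun v : {v : V // v ∉ γ.verts} => Quot.mk (grel G γ.edges) v.1) :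
        Quot rsub ⊕ {v : V // v ∉ γ.verts} → Quot (grel G γ.edges)) := by
    constructor
    · rintro (u | ⟨v, hv⟩) (w | ⟨w', hw'⟩) h
      · obtain ⟨a, rfl⟩ := Quot.exists_rep u
        obtain ⟨b, rfl⟩ := Quot.exists_rep w
        simp only [Sum.elim_inl] at h
        have h' := Quot.eqvGen_exact h
        rcases key _ _ h' with heq | ⟨ha, hb, hh⟩
        · exact congrArg _ (congrArg _ (Subtype.ext heq))
        · refine congrArg _ (Quot.eqvGen_sound ?_)
          convert hh <;> simp
      · obtain ⟨a, rfl⟩ := Quot.exists_rep u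
        simp only [Sum.elim_inl, Sum.elim_inr] at h
        have h' := Quot.eqvGen_exact h
        rcases key _ _ h' with heq | ⟨ha, hb, hh⟩
        · exact absurd (heq ▸ a.2) hw'
        · exact absurd hb hw'
      · obtain ⟨b, rfl⟩ := Quot.exists_rep w
        simp only [Sum.elim_inl, Sum.elim_inr] at h
        have h' := Quot.eqvGen_exact h
        rcases key _ _ h' with heq | ⟨ha, hb, hh⟩
        · exact absurd (heq ▸ b.2) hv
        · exact absurd ha hv
      · simp only [Sum.elim_inr] at h
        have h' := Quot.eqvGen_exact h
        rcases key _ _ h' with heq | ⟨ha, hb, hh⟩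
        · exact congrArg _ (Subtype.ext heq)
        · exact absurd ha hv
    · intro y
      obtain ⟨x, rfl⟩ := Quot.exists_rep y
      by_cases hx : x ∈ γ.verts
      · exact ⟨Sum.inl (Quot.mk _ ⟨x, hx⟩), rfl⟩
      · exact ⟨Sum.inr ⟨x, hx⟩, rfl⟩
  have hcard := Nat.card_eq_of_bijective _ hbij
  rw [Nat.card_sum] at hcard
  have h2 : Nat.card {v : V // v ∉ γ.verts} = Fintype.card V - γ.verts.card := by
    rw [Nat.card_eq_fintype_card]
    have := Fintype.card_subtype_compl (fun v : V => v ∈ γ.verts)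
    rw [this, Fintype.card_coe]
  have hle := Finset.card_le_univ γ.verts
  have hc : comps G γ = Nat.card (Quot rsub) := rfl
  have hn : ncomps G γ.edges = Nat.card (Quot (grel G γ.edges)) := rfl
  rw [hc, hn]
  omega

theorem cycleRank_eq_rk (G : E → Sym2 V) (γ : Subgraph G) :
    cycleRank G γ = rk G γ.edges := by
  have h := comps_eq_ncomps G γ
  rw [cycleRank, rk]
  omega

theorem comps_spanningSub (G : E → Sym2 V) (S : Finset E) :
    comps G (spanningSub G S) = ncomps G S := by
  have h := comps_eq_ncomps G (spanningSub G S)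
  have : (spanningSub G S).verts.card = Fintype.card V := Finset.card_univ
  rw [this] at h
  have : (spanningSub G S).edges = S := rfl
  rw [this] at h
  omega

end Graph

section Graph2
open Relation
variable {V E : Type} [Fintype V] [Fintype E] [DecidableEq V] [DecidableEq E]

theorem ncomps_spanning_tree {G : E → Sym2 V} {T : Finset E} (hT : IsSpanningTree G T) :
    ncomps G T = 1 := by
  rw [← comps_spanningSub]; exact hT.2

theorem rk_spanning_tree {G : E → Sym2 V} {T : Finset E} (hT : IsSpanningTree G T) :
    rk G T = 0 := by
  have h1 := ncomps_spanning_tree hT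
  have h2 := hT.1
  rw [rk, h1]
  omega

theorem rk_univ {G : E → Sym2 V} (hconn : GraphConnected G) :
    rk G (Finset.univ : Finset E) = (Fintype.card E : ℤ) - (Fintype.card V : ℤ) + 1 := by
  have h1 : ncomps G Finset.univ = 1 := by rw [← comps_spanningSub]; exact hconn
  rw [rk, h1, Finset.card_univ]; norm_num

theorem rk_le_sdiff {G : E → Sym2 V} {T : Finset E} (hT : IsSpanningTree G T) (S : Finset E) :
    rk G S ≤ ((S \ T).card : ℤ) := by
  have h1 : ncomps G S ≤ ncomps G (S ∩ T) := ncomps_mono G (Finset.inter_subset_left)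
  have h2 : rk G (S ∩ T) ≤ 0 := (rk_mono G (Finset.inter_subset_right)).trans
    (rk_spanning_tree hT).le
  have h3 : (S ∩ T).card + (S \ T).card = S.card := Finset.card_inter_add_card_sdiff S T
  rw [rk] at *
  omega

theorem sum_ind {S F : Finset E} : ∑ e ∈ S, ind F e = ((S ∩ F).card : ℝ) := by
  unfold ind
  rw [Finset.sum_ite_mem, Finset.sum_const, nsmul_eq_mul, mul_one]

end Graph2

section Main
open Relation
open scoped Pointwise
variable {V E : Type} [Fintype V] [Fintype E] [DecidableEq V] [DecidableEq E]

theorem mem_RHS_iff {G : E → Sym2 V} (x : E → ℝ) :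
    ((∀ γ : Subgraph G, (cycleRank G γ : ℝ) ≤ ∑ e ∈ γ.edges, x e) ∧
      ∑ e, x e ≤ (cycleRank G (spanningSub G Finset.univ) : ℝ) + 1)
    ↔ ((∀ S : Finset E, (rk G S : ℝ) ≤ ∑ e ∈ S, x e) ∧
      ∑ e, x e ≤ (rk G Finset.univ : ℝ) + 1) := by
  have h2 : cycleRank G (spanningSub G Finset.univ) = rk G (Finset.univ : Finset E) :=
    cycleRank_eq_rk G (spanningSub G Finset.univ)
  constructor
  · rintro ⟨h, htot⟩
    refine ⟨fun S => ?_, by rwa [h2] at htot⟩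
    have := h (spanningSub G S)
    rwa [cycleRank_eq_rk] at this
  · rintro ⟨h, htot⟩
    refine ⟨fun γ => ?_, by rwa [h2]⟩
    rw [cycleRank_eq_rk]
    exact h γ.edges

theorem sum_linear (s : Finset E) : IsLinearMap ℝ (fun x : E → ℝ => ∑ e ∈ s, x e) := by
  constructor
  · intro x y; exact Finset.sum_add_distrib
  · intro c x
    simp only [Pi.smul_apply, smul_eq_mul, ← Finset.mul_sum]

theorem RHS_convex {G : E → Sym2 V} :
    Convex ℝ {x : E → ℝ |
        (∀ γ : Subgraph G, (cycleRank G γ : ℝ) ≤ ∑ e ∈ γ.edges, x e) ∧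
        ∑ e, x e ≤ (cycleRank G (spanningSub G Finset.univ) : ℝ) + 1} := by
  have : {x : E → ℝ |
        (∀ γ : Subgraph G, (cycleRank G γ : ℝ) ≤ ∑ e ∈ γ.edges, x e) ∧
        ∑ e, x e ≤ (cycleRank G (spanningSub G Finset.univ) : ℝ) + 1}
      = (⋂ γ : Subgraph G, {x : E → ℝ | (cycleRank G γ : ℝ) ≤ ∑ e ∈ γ.edges, x e}) ∩
        {x : E → ℝ | ∑ e, x e ≤ (cycleRank G (spanningSub G Finset.univ) : ℝ) + 1} := by
    ext x
    simp [Set.mem_iInter]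
  rw [this]
  exact Convex.inter (convex_iInter fun γ => convex_halfSpace_ge (sum_linear _) _)
    (convex_halfSpace_le (sum_linear _) _)

theorem gen_mem_RHS {G : E → Sym2 V} (hconn : GraphConnected G)
    {T : Finset E} (hT : IsSpanningTree G T) {v : E → ℝ}
    (hv : v ∈ ({0} ∪ Set.range fun e : E => (Pi.single e 1 : E → ℝ) : Set (E → ℝ))) :
    (∀ S : Finset E, (rk G S : ℝ) ≤ ∑ e ∈ S, (ind Tᶜ + v) e) ∧
      ∑ e, (ind Tᶜ + v) e ≤ (rk G (Finset.univ : Finset E) : ℝ) + 1 := by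
  have hv0 : ∀ e, 0 ≤ v e := by
    rcases hv with rfl | ⟨f, rfl⟩
    · intro e; exact le_refl 0
    · intro e
      simp only [Pi.single_apply]
      split <;> norm_num
  have hv1 : ∑ e, v e ≤ 1 := by
    rcases hv with rfl | ⟨f, rfl⟩
    · simp
    · rw [Finset.sum_pi_single']
      simp
  constructor
  · intro S
    have h1 : (rk G S : ℝ) ≤ ((S \ T).card : ℤ) := by exact_mod_cast rk_le_sdiff hT S
    have h2 : ∑ e ∈ S, (ind Tᶜ + v) e = ∑ e ∈ S, ind Tᶜ e + ∑ e ∈ S, v e := by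
      simp [Finset.sum_add_distrib]
    have h3 : ∑ e ∈ S, ind Tᶜ e = ((S ∩ Tᶜ).card : ℝ) := sum_ind
    have h4 : S ∩ Tᶜ = S \ T := by ext e; simp [Finset.mem_sdiff, and_comm]
    have h5 : 0 ≤ ∑ e ∈ S, v e := Finset.sum_nonneg fun e _ => hv0 e
    rw [h2, h3, h4]
    push_cast at h1 ⊢
    linarith
  · have h2 : ∑ e, (ind Tᶜ + v) e = ∑ e, ind Tᶜ e + ∑ e, v e := by
      simp [Finset.sum_add_distrib]
    have h3 : ∑ e, ind Tᶜ e = ((Finset.univ ∩ Tᶜ).card : ℝ) := sum_ind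
    have h4 : (Finset.univ ∩ Tᶜ : Finset E) = Tᶜ := by rw [Finset.univ_inter]
    have h5 : (Tᶜ : Finset E).card = Fintype.card E - T.card := Finset.card_compl T
    have h6 : T.card ≤ Fintype.card E := Finset.card_le_univ T
    have h7 := rk_univ (G := G) hconn
    have h8 := hT.1
    rw [h2, h3, h4, h7]
    have : ((Tᶜ : Finset E).card : ℝ) = (Fintype.card E : ℝ) - T.card := by
      rw [h5]; push_cast [Nat.cast_sub h6]; ring
    rw [this]
    push_cast
    have : (T.card : ℝ) + 1 = Fintype.card V := by exact_mod_cast h8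
    linarith

theorem forward {G : E → Sym2 V} (hconn : GraphConnected G) :
    (convexHull ℝ {x : E → ℝ | ∃ T, IsSpanningTree G T ∧ x = ind Tᶜ}) +
        convexHull ℝ ({0} ∪ Set.range fun e : E => (Pi.single e 1 : E → ℝ)) ⊆
      {x : E → ℝ |
        (∀ γ : Subgraph G, (cycleRank G γ : ℝ) ≤ ∑ e ∈ γ.edges, x e) ∧
        ∑ e, x e ≤ (cycleRank G (spanningSub G Finset.univ) : ℝ) + 1} := by
  rw [← convexHull_add]
  refine convexHull_min ?_ RHS_convex
  rintro y ⟨a, ha, v, hv, rfl⟩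
  obtain ⟨T, hT, rfl⟩ := ha
  rw [Set.mem_setOf_eq, mem_RHS_iff]
  exact gen_mem_RHS hconn hT hv

end Main

section Greedy
open Relation
open scoped Pointwise
variable {V E : Type} [Fintype V] [Fintype E] [DecidableEq V] [DecidableEq E]

/-- suffix set of the sorted edge enumeration -/
def Bset {n : ℕ} (ρ : Fin n ≃ E) (k : ℕ) : Finset E :=
  Finset.univ.filter fun e => k ≤ ((ρ.symm e : Fin n) : ℕ)

theorem Bset_zero {n : ℕ} (ρ : Fin n ≃ E) : Bset ρ 0 = Finset.univ := by
  simp [Bset]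

theorem Bset_top {n : ℕ} (ρ : Fin n ≃ E) : Bset ρ n = ∅ := by
  refine Finset.eq_empty_of_forall_notMem fun e he => ?_
  simp only [Bset, Finset.mem_filter] at he
  exact absurd he.2 (not_le.2 (ρ.symm e).isLt)

theorem Bset_step {n : ℕ} (ρ : Fin n ≃ E) (i : Fin n) :
    Bset ρ i.1 = insert (ρ i) (Bset ρ (i.1 + 1)) := by
  ext e
  simp only [Bset, Finset.mem_filter, Finset.mem_univ, true_and, Finset.mem_insert]
  constructor
  · intro h
    rcases eq_or_lt_of_le h with heq | hlt
    · left
      have : ρ.symm e = i := Fin.ext heq.symm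
      rw [← this, Equiv.apply_symm_apply]
    · right; omega
  · rintro (rfl | h)
    · rw [Equiv.symm_apply_apply]
    · omega

theorem not_mem_Bset_succ {n : ℕ} (ρ : Fin n ≃ E) (i : Fin n) :
    ρ i ∉ Bset ρ (i.1 + 1) := by
  simp [Bset, Equiv.symm_apply_apply]

/-- the set of "dependent" edges in the greedy scan -/
noncomputable def Dset (G : E → Sym2 V) {n : ℕ} (ρ : Fin n ≃ E) : Finset E :=
  (Finset.univ.filter fun i : Fin n => conn G (Bset ρ (i.1 + 1)) (ρ i)).image ρ

theorem mem_Dset (G : E → Sym2 V) {n : ℕ} (ρ : Fin n ≃ E) (i : Fin n) :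
    ρ i ∈ Dset G ρ ↔ conn G (Bset ρ (i.1 + 1)) (ρ i) := by
  constructor
  · intro h
    simp only [Dset, Finset.mem_image, Finset.mem_filter, Finset.mem_univ, true_and] at h
    obtain ⟨j, hj, hje⟩ := h
    rwa [ρ.injective hje] at hj
  · intro h
    simp only [Dset, Finset.mem_image]
    exact ⟨i, by simpa using h, rfl⟩

theorem Q1 (G : E → Sym2 V) {n : ℕ} (hn : n = Fintype.card E) (ρ : Fin n ≃ E) :
    ∀ m, m ≤ n → (Bset ρ (n - m)).card = m := by
  intro m
  induction m with
  | zero => intro _; simp [Nat.sub_zero, Bset_top ρ]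
  | succ m ih =>
    intro hm
    have hk : n - (m+1) < n := by omega
    set i : Fin n := ⟨n - (m+1), hk⟩ with hi
    have h1 : n - m = i.1 + 1 := by simp [hi]; omega
    have h2 := Bset_step ρ i
    rw [show (n - (m+1)) = i.1 from rfl, h2,
      Finset.card_insert_of_notMem (not_mem_Bset_succ ρ i), ← h1, ih (by omega)]

theorem Q2 (G : E → Sym2 V) {n : ℕ} (hn : n = Fintype.card E) (ρ : Fin n ≃ E) :
    ∀ m, m ≤ n → rk G (Bset ρ (n - m)) = ((Dset G ρ ∩ Bset ρ (n - m)).card : ℤ) := by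
  intro m
  induction m with
  | zero => intro _; simp [Nat.sub_zero, Bset_top ρ, rk_empty]
  | succ m ih =>
    intro hm
    have hk : n - (m+1) < n := by omega
    set i : Fin n := ⟨n - (m+1), hk⟩ with hi
    have h1 : n - m = i.1 + 1 := by simp [hi]; omega
    have h2 := Bset_step ρ i
    have hni := not_mem_Bset_succ ρ i
    rw [show (n - (m+1)) = i.1 from rfl, h2, rk_insert G hni]
    have hDcap : Dset G ρ ∩ (insert (ρ i) (Bset ρ (i.1+1)))
        = if conn G (Bset ρ (i.1+1)) (ρ i) then
            insert (ρ i) (Dset G ρ ∩ Bset ρ (i.1+1)) else Dset G ρ ∩ Bset ρ (i.1+1) := by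
      split
      · next hc =>
        rw [Finset.inter_insert_of_mem ((mem_Dset G ρ i).2 hc)]
      · next hc =>
        rw [Finset.inter_insert_of_notMem (fun hmem => hc ((mem_Dset G ρ i).1 hmem))]
    rw [hDcap]
    split
    · next hc =>
      rw [Finset.card_insert_of_notMem (fun hmem => hni (Finset.mem_of_mem_inter_right hmem))]
      rw [← h1] at *
      rw [ih (by omega)]
      push_cast; ring
    · next hc =>
      rw [← h1] at *
      rw [ih (by omega)]
      push_cast; ring

theorem Q4 (G : E → Sym2 V) {n : ℕ} (hn : n = Fintype.card E) (ρ : Fin n ≃ E) :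
    ∀ m, m ≤ n → ncomps G ((Dset G ρ)ᶜ ∪ Bset ρ (n - m)) = ncomps G (Dset G ρ)ᶜ := by
  intro m
  induction m with
  | zero => intro _; simp [Nat.sub_zero, Bset_top ρ]
  | succ m ih =>
    intro hm
    have hk : n - (m+1) < n := by omega
    set i : Fin n := ⟨n - (m+1), hk⟩ with hi
    have h1 : n - m = i.1 + 1 := by simp [hi]; omega
    have h2 := Bset_step ρ i
    rw [show (n - (m+1)) = i.1 from rfl, h2, Finset.union_insert]
    by_cases hc : conn G (Bset ρ (i.1+1)) (ρ i)
    · have hconn' : conn G ((Dset G ρ)ᶜ ∪ Bset ρ (i.1+1)) (ρ i) :=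
        conn_mono G Finset.subset_union_right hc
      rw [ncomps_insert_conn G hconn', ← h1, ih (by omega)]
    · have hmemT : ρ i ∈ (Dset G ρ)ᶜ := by
        rw [Finset.mem_compl]
        exact fun hmem => hc ((mem_Dset G ρ i).1 hmem)
      rw [Finset.insert_eq_self.2 (Finset.mem_union_left _ hmemT), ← h1, ih (by omega)]

end Greedy

section Greedy2
open Relation
variable {V E : Type} [Fintype V] [Fintype E] [DecidableEq V] [DecidableEq E]

theorem Q3 (G : E → Sym2 V) {n : ℕ} (ρ : Fin n ≃ E) (c x : E → ℝ)
    (hanti : ∀ i j : Fin n, i ≤ j → c (ρ j) ≤ c (ρ i))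
    (hx : ∀ S : Finset E, (rk G S : ℝ) ≤ ∑ e ∈ S, x e) :
    ∀ m, m ≤ n →
      ∑ e ∈ Bset ρ (n - m), c e * x e ≤
        (∑ e ∈ Dset G ρ ∩ Bset ρ (n - m), c e) +
          (if h : n - m < n then c (ρ ⟨n - m, h⟩) else 0) *
            (∑ e ∈ Bset ρ (n - m), x e - (rk G (Bset ρ (n - m)) : ℝ)) := by
  intro m
  induction m with
  | zero =>
    intro _
    rw [Nat.sub_zero, Bset_top ρ, dif_neg (lt_irrefl n)]
    simp [rk_empty]
  | succ m ih =>
    intro hm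
    have hk : n - (m+1) < n := by omega
    set i : Fin n := ⟨n - (m+1), hk⟩ with hi
    have h1 : n - m = i.1 + 1 := by simp [hi]; omega
    have hIH := ih (by omega)
    rw [h1] at hIH
    have hni := not_mem_Bset_succ ρ i
    have hBs := Bset_step ρ i
    rw [show n - (m+1) = i.1 from rfl, dif_pos hk, hBs]
    rw [Finset.sum_insert hni, Finset.sum_insert hni]
    have hrkR : ((rk G (insert (ρ i) (Bset ρ (i.1+1)))) : ℝ)
        = ((rk G (Bset ρ (i.1+1))) : ℝ)
          + (if conn G (Bset ρ (i.1+1)) (ρ i) then (1:ℝ) else 0) := by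
      rw [rk_insert G hni]
      push_cast
      split <;> norm_num
    have ht' : 0 ≤ ∑ e ∈ Bset ρ (i.1+1), x e - ((rk G (Bset ρ (i.1+1))) : ℝ) := by
      have := hx (Bset ρ (i.1+1)); linarith
    have hcoef : (if h : i.1 + 1 < n then c (ρ ⟨i.1 + 1, h⟩) else 0) *
          (∑ e ∈ Bset ρ (i.1+1), x e - ((rk G (Bset ρ (i.1+1))) : ℝ))
        ≤ c (ρ i) * (∑ e ∈ Bset ρ (i.1+1), x e - ((rk G (Bset ρ (i.1+1))) : ℝ)) := by
      by_cases h : i.1 + 1 < n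
      · rw [dif_pos h]
        refine mul_le_mul_of_nonneg_right ?_ ht'
        exact hanti i ⟨i.1+1, h⟩ (by simp [Fin.le_def])
      · rw [dif_neg h]
        have hB' : Bset ρ (i.1+1) = ∅ := by
          have : i.1 + 1 = n := by omega
          rw [this, Bset_top ρ]
        rw [hB', rk_empty]
        simp
    by_cases hc : conn G (Bset ρ (i.1+1)) (ρ i)
    · have hDcap : Dset G ρ ∩ (insert (ρ i) (Bset ρ (i.1+1)))
          = insert (ρ i) (Dset G ρ ∩ Bset ρ (i.1+1)) :=
        Finset.inter_insert_of_mem ((mem_Dset G ρ i).2 hc)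
      rw [hDcap, Finset.sum_insert
        (fun hmem => hni (Finset.mem_of_mem_inter_right hmem))]
      rw [hrkR, if_pos hc]
      nlinarith [hIH, hcoef]
    · have hDcap : Dset G ρ ∩ (insert (ρ i) (Bset ρ (i.1+1)))
          = Dset G ρ ∩ Bset ρ (i.1+1) :=
        Finset.inter_insert_of_notMem (fun hmem => hc ((mem_Dset G ρ i).1 hmem))
      rw [hDcap, hrkR, if_neg hc]
      nlinarith [hIH, hcoef]

end Greedy2

section Greedy3
open Relation
variable {V E : Type} [Fintype V] [Fintype E] [DecidableEq V] [DecidableEq E]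

theorem sum_mul_ind (c : E → ℝ) (D : Finset E) : ∑ e, c e * ind D e = ∑ e ∈ D, c e := by
  unfold ind
  simp only [mul_ite, mul_one, mul_zero]
  rw [Finset.sum_ite_mem, Finset.univ_inter]

theorem sum_mul_single (c : E → ℝ) (f : E) : ∑ e, c e * (Pi.single f 1 : E → ℝ) e = c f := by
  simp only [Pi.single_apply, mul_ite, mul_one, mul_zero]
  rw [Finset.sum_ite_eq' Finset.univ f c, if_pos (Finset.mem_univ f)]

theorem greedy {G : E → Sym2 V} (hconn : GraphConnected G) (c x : E → ℝ)
    (hx : ∀ S : Finset E, (rk G S : ℝ) ≤ ∑ e ∈ S, x e)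
    (hx2 : ∑ e, x e ≤ (rk G (Finset.univ : Finset E) : ℝ) + 1) :
    ∃ T v, IsSpanningTree G T ∧
      v ∈ ({0} ∪ Set.range fun e : E => (Pi.single e 1 : E → ℝ) : Set (E → ℝ)) ∧
      ∑ e, c e * x e ≤ ∑ e, c e * (ind Tᶜ + v) e := by
  classical
  set n := Fintype.card E with hn
  set σ0 : E ≃ Fin n := Fintype.equivFin E with hσ0
  set g : Fin n → ℝ := fun i => -(c (σ0.symm i)) with hg
  set ρ : Fin n ≃ E := (Tuple.sort g).trans σ0.symm with hρ
  have hanti : ∀ i j : Fin n, i ≤ j → c (ρ j) ≤ c (ρ i) := by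
    intro i j hij
    have := Tuple.monotone_sort g hij
    simp only [Function.comp_apply, hg] at this
    have h2 : -(c (ρ i)) ≤ -(c (ρ j)) := this
    linarith
  set D := Dset G ρ with hD
  set T := Dᶜ with hT
  have hTc : Tᶜ = D := compl_compl D
  -- the component count of the whole graph
  have hnc1 : ncomps G (Finset.univ : Finset E) = 1 := by
    rw [← comps_spanningSub]; exact hconn
  -- rank of whole graph equals |D|
  have hQ2 := Q2 G hn ρ n le_rfl
  rw [Nat.sub_self, Bset_zero ρ, Finset.inter_univ] at hQ2
  -- tree count
  have hQ4 := Q4 G hn ρ n le_rfl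
  rw [Nat.sub_self, Bset_zero ρ, Finset.union_eq_right.2 (Finset.subset_univ _)] at hQ4
  have hTtree : IsSpanningTree G T := by
    constructor
    · -- cardinality
      have h1 : rk G (Finset.univ : Finset E) = (Fintype.card E : ℤ) - (Fintype.card V : ℤ) + 1 :=
        rk_univ hconn
      have h2 : T.card = Fintype.card E - D.card := by
        rw [hT, Finset.card_compl]
      have h3 : D.card ≤ Fintype.card E := Finset.card_le_univ D
      rw [h1] at hQ2
      have h4 : (T.card : ℤ) = (Fintype.card E : ℤ) - D.card := by
        rw [h2, Nat.cast_sub h3]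
      have h5 : (T.card : ℤ) + 1 = (Fintype.card V : ℤ) := by
        rw [h4]; linarith [hQ2]
      exact_mod_cast h5
    · rw [comps_spanningSub, ← hQ4, hnc1]
  -- the bound
  have hQ3 := Q3 G ρ c x hanti hx n le_rfl
  rw [Nat.sub_self, Bset_zero ρ, Finset.inter_univ] at hQ3
  have ht0 : (0:ℝ) ≤ ∑ e, x e - (rk G (Finset.univ : Finset E) : ℝ) := by
    have := hx Finset.univ; linarith
  have ht1 : ∑ e, x e - (rk G (Finset.univ : Finset E) : ℝ) ≤ 1 := by linarith
  by_cases hpos : (0:ℝ) < (if h : 0 < n then c (ρ ⟨0, h⟩) else 0)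
  · have hn0 : 0 < n := by
      by_contra h
      rw [dif_neg h] at hpos
      exact lt_irrefl 0 hpos
    rw [dif_pos hn0] at hQ3 hpos
    refine ⟨T, Pi.single (ρ ⟨0, hn0⟩) 1, hTtree, Or.inr ⟨_, rfl⟩, ?_⟩
    have hval : ∑ e, c e * ((ind Tᶜ + Pi.single (ρ ⟨0, hn0⟩) 1 : E → ℝ)) e
        = (∑ e ∈ D, c e) + c (ρ ⟨0, hn0⟩) := by
      rw [hTc]
      simp only [Pi.add_apply, mul_add, Finset.sum_add_distrib]
      rw [sum_mul_ind, sum_mul_single]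
    rw [hval]
    nlinarith [hQ3, ht1, ht0]
  · push_neg at hpos
    refine ⟨T, 0, hTtree, Or.inl rfl, ?_⟩
    have hval : ∑ e, c e * ((ind Tᶜ + 0 : E → ℝ)) e = ∑ e ∈ D, c e := by
      rw [hTc]
      simp only [add_zero]
      exact sum_mul_ind c D
    rw [hval]
    nlinarith [hQ3, ht0]

end Greedy3

section Final
open Relation
open scoped Pointwise
variable {V E : Type} [Fintype V] [Fintype E] [DecidableEq V] [DecidableEq E]

theorem graph_polytope_eq' (G : E → Sym2 V) (hconn : GraphConnected G) :
    (convexHull ℝ {x : E → ℝ | ∃ T, IsSpanningTree G T ∧ x = ind Tᶜ}) +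
        convexHull ℝ ({0} ∪ Set.range fun e : E => (Pi.single e 1 : E → ℝ)) =
      {x : E → ℝ |
        (∀ γ : Subgraph G, (cycleRank G γ : ℝ) ≤ ∑ e ∈ γ.edges, x e) ∧
        ∑ e, x e ≤ (cycleRank G (spanningSub G Finset.univ) : ℝ) + 1} := by
  classical
  set A : Set (E → ℝ) := {x : E → ℝ | ∃ T, IsSpanningTree G T ∧ x = ind Tᶜ} with hA
  set Bs : Set (E → ℝ) := {0} ∪ Set.range fun e : E => (Pi.single e 1 : E → ℝ) with hBs
  have hAfin : A.Finite := by
    have hsub : A ⊆ (fun T : Finset E => ind Tᶜ) '' Set.univ := by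
      rintro x ⟨T, hT, rfl⟩; exact ⟨T, trivial, rfl⟩
    exact (Set.finite_univ.image _).subset hsub
  have hBfin : Bs.Finite := (Set.finite_singleton 0).union (Set.finite_range _)
  have hLc : IsCompact (convexHull ℝ A + convexHull ℝ Bs) :=
    (hAfin.isCompact_convexHull ℝ).add (hBfin.isCompact_convexHull ℝ)
  have hLclosed : IsClosed (convexHull ℝ A + convexHull ℝ Bs) := hLc.isClosed
  have hLconv : Convex ℝ (convexHull ℝ A + convexHull ℝ Bs) :=
    (convex_convexHull ℝ A).add (convex_convexHull ℝ Bs)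
  apply Set.Subset.antisymm
  · exact forward hconn
  · intro x hx
    rw [Set.mem_setOf_eq, mem_RHS_iff] at hx
    obtain ⟨hx1, hx2⟩ := hx
    by_contra hxmem
    obtain ⟨f, u, hfs, hfx⟩ := geometric_hahn_banach_closed_point hLconv hLclosed hxmem
    set c : E → ℝ := fun e => f (Pi.single e 1) with hc
    have hbasis : ∀ e : E, (fun j => if e = j then (1:ℝ) else 0) = (Pi.single e 1 : E → ℝ) := by
      intro e; ext j; simp [Pi.single_apply, eq_comm]
    have hrepr : ∀ y : E → ℝ, f y = ∑ e, c e * y e := by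
      intro y
      conv_lhs => rw [pi_eq_sum_univ y]
      rw [map_sum]
      refine Finset.sum_congr rfl fun e _ => ?_
      rw [map_smul, hbasis e, smul_eq_mul, hc]
      ring
    obtain ⟨T, v, hT, hv, hineq⟩ := greedy hconn c x hx1 hx2
    have hyL : ind Tᶜ + v ∈ convexHull ℝ A + convexHull ℝ Bs :=
      Set.add_mem_add (subset_convexHull ℝ A ⟨T, hT, rfl⟩) (subset_convexHull ℝ Bs hv)
    have h1 := hfs _ hyL
    have h2 := hrepr (ind Tᶜ + v)
    have h3 := hrepr x
    linarith

end Final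


/-- The graph polytope `P_Γ = SP_Γ + E_n` (Minkowski sum of the spanning-tree polytope
and the convex hull of `0, e₁, …, e_n`) coincides with the polytope `P'_Γ` cut out by
the inequalities `⟨1_γ, x⟩ ≥ ℓ_γ` for all subgraphs `γ ⊆ Γ` and `⟨1_Γ, x⟩ ≤ ℓ_Γ + 1`. -/
theorem graph_polytope_eq (G : E → Sym2 V) (hconn : GraphConnected G) :
    (convexHull ℝ {x : E → ℝ | ∃ T, IsSpanningTree G T ∧ x = ind Tᶜ}) +
        convexHull ℝ ({0} ∪ Set.range fun e : E => (Pi.single e 1 : E → ℝ)) =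
      {x : E → ℝ |
        (∀ γ : Subgraph G, (cycleRank G γ : ℝ) ≤ ∑ e ∈ γ.edges, x e) ∧
        ∑ e, x e ≤ (cycleRank G (spanningSub G Finset.univ) : ℝ) + 1} := by
  exact graph_polytope_eq' G hconn
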